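/- Let K = [[H, B],[Bᵀ, -C]] with H symmetric positive definite, B full column rank, C symmetric positive semidefinite. If K = L D Lᵀ with L unit lower triangular and D diagonal, then D has exactly n positive and m negative diagonal entries, where n is the order of H and m the order of C. -/

import Mathlib

open Matrix

section Aux

variable {ι : Type*} [Fintype ι]

/-- Subspace of functions vanishing on a finite set. -/
noncomputable def vanishOn (S : Finset ι) : Submodule ℝ (ι → ℝ) :=
  LinearMap.ker (LinearMap.funLeft ℝ ℝ ((↑) : {i // i ∈ S} → ι))

lemma mem_vanishOn {S : Finset ι} {x : ι → ℝ} :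
    x ∈ vanishOn S ↔ ∀ i ∈ S, x i = 0 := by
  simp [vanishOn, LinearMap.mem_ker, funext_iff, Function.comp, Subtype.forall,
    LinearMap.funLeft_apply]

lemma vanishOn_finrank (S : Finset ι) :
    Module.finrank ℝ (vanishOn S) + S.card = Fintype.card ι := by
  have hsurj : Function.Surjective (LinearMap.funLeft ℝ ℝ ((↑) : {i // i ∈ S} → ι)) :=
    LinearMap.funLeft_surjective_of_injective ℝ ℝ _ Subtype.coe_injective
  have h := LinearMap.finrank_range_add_finrank_ker
    (LinearMap.funLeft ℝ ℝ ((↑) : {i // i ∈ S} → ι))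
  rw [LinearMap.range_eq_top.mpr hsurj, finrank_top] at h
  simp only [Module.finrank_fintype_fun_eq_card, Fintype.card_coe] at h
  rw [vanishOn]
  omega

lemma finrank_add_finrank_le_of_inter (V W : Submodule ℝ (ι → ℝ))
    (h : ∀ x, x ∈ V → x ∈ W → x = 0) :
    Module.finrank ℝ V + Module.finrank ℝ W ≤ Fintype.card ι := by
  have hinf : V ⊓ W = ⊥ := by
    rw [eq_bot_iff]
    intro x hx
    simpa using h x hx.1 hx.2
  have h2 := Submodule.finrank_sup_add_finrank_inf_eq V W
  rw [hinf, finrank_bot, add_zero] at h2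
  rw [← h2]
  calc Module.finrank ℝ ↥(V ⊔ W) ≤ Module.finrank ℝ (ι → ℝ) := Submodule.finrank_le _
    _ = Fintype.card ι := Module.finrank_fintype_fun_eq_card ℝ

end Aux

theorem saddle_point_inertia {n m : ℕ}
    (H : Matrix (Fin n) (Fin n) ℝ) (B : Matrix (Fin n) (Fin m) ℝ)
    (C : Matrix (Fin m) (Fin m) ℝ)
    (L D : Matrix (Fin n ⊕ Fin m) (Fin n ⊕ Fin m) ℝ)
    (hH : H.PosDef) (hHsymm : Hᵀ = H)
    (hB : B.rank = m)
    (hC : C.PosSemidef) (hCsymm : Cᵀ = C)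
    (hLlow : ∀ i j : Fin n ⊕ Fin m,
      finSumFinEquiv i < finSumFinEquiv j → L i j = 0)
    (hLdiag : ∀ i : Fin n ⊕ Fin m, L i i = 1)
    (hD : ∀ i j : Fin n ⊕ Fin m, i ≠ j → D i j = 0)
    (hK : Matrix.fromBlocks H B Bᵀ (-C) = L * D * Lᵀ) :
    (Finset.univ.filter fun i : Fin n ⊕ Fin m => 0 < D i i).card = n ∧
    (Finset.univ.filter fun i : Fin n ⊕ Fin m => D i i < 0).card = m := by
  set P := Finset.univ.filter fun i : Fin n ⊕ Fin m => 0 < D i i with hPdef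
  set N := Finset.univ.filter fun i : Fin n ⊕ Fin m => D i i < 0 with hNdef
  have hcard : Fintype.card (Fin n ⊕ Fin m) = n + m := by simp
  -- determinant of L is 1, hence Lᵀ mulVec is injective
  have hdetL : L.det = 1 := by
    have h1 : L.det = (L.submatrix finSumFinEquiv.symm finSumFinEquiv.symm).det :=
      (det_submatrix_equiv_self finSumFinEquiv.symm L).symm
    rw [h1, det_of_lowerTriangular _ ?ht]
    · simp [hLdiag]
    case ht =>
      intro i j hij
      apply hLlow
      simpa using hij
  have hLTunit : IsUnit Lᵀ := (isUnit_iff_isUnit_det _).mpr (by rw [det_transpose, hdetL]; exact isUnit_one)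
  have hLTinj : Function.Injective (Lᵀ).mulVec := mulVec_injective_iff_isUnit.mpr hLTunit
  -- quadratic form identity
  have hquad : ∀ y : Fin n ⊕ Fin m → ℝ,
      (Lᵀ *ᵥ y) ⬝ᵥ (D *ᵥ (Lᵀ *ᵥ y)) =
        y ⬝ᵥ ((Matrix.fromBlocks H B Bᵀ (-C)) *ᵥ y) := by
    intro y
    rw [hK, mulVec_transpose, ← dotProduct_mulVec, mulVec_mulVec, ← mulVec_transpose,
      mulVec_mulVec]
  -- diagonal action
  have hDx : ∀ (x : Fin n ⊕ Fin m → ℝ) i, (D *ᵥ x) i = D i i * x i := by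
    intro x i
    rw [mulVec, dotProduct, Finset.sum_eq_single i]
    · intro j _ hj; rw [hD i j (Ne.symm hj), zero_mul]
    · intro h; exact absurd (Finset.mem_univ i) h
  have hDquad : ∀ x : Fin n ⊕ Fin m → ℝ,
      x ⬝ᵥ (D *ᵥ x) = ∑ i, D i i * (x i * x i) := by
    intro x
    rw [dotProduct]
    refine Finset.sum_congr rfl fun i _ => ?_
    rw [hDx]; ring
  -- sign bounds on vanishing subspaces
  have hnonpos : ∀ x, x ∈ vanishOn P → x ⬝ᵥ (D *ᵥ x) ≤ 0 := by
    intro x hx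
    rw [hDquad]
    refine Finset.sum_nonpos fun i _ => ?_
    by_cases hxi : x i = 0
    · simp [hxi]
    · have hiP : i ∉ P := fun hiP => hxi ((mem_vanishOn.mp hx) i hiP)
      have hDi : D i i ≤ 0 := by
        by_contra hpos
        exact hiP (by simp [hPdef, lt_of_not_ge hpos])
      have := mul_self_nonneg (x i)
      exact mul_nonpos_of_nonpos_of_nonneg hDi this
  have hnonneg : ∀ x, x ∈ vanishOn N → 0 ≤ x ⬝ᵥ (D *ᵥ x) := by
    intro x hx
    rw [hDquad]
    refine Finset.sum_nonneg fun i _ => ?_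
    by_cases hxi : x i = 0
    · simp [hxi]
    · have hiN : i ∉ N := fun hiN => hxi ((mem_vanishOn.mp hx) i hiN)
      have hDi : 0 ≤ D i i := by
        by_contra hneg
        exact hiN (by simp [hNdef, lt_of_not_ge hneg])
      exact mul_nonneg hDi (mul_self_nonneg (x i))
  -- the positive subspace
  let j1 : (Fin n → ℝ) →ₗ[ℝ] (Fin n ⊕ Fin m → ℝ) :=
    { toFun := fun u => Sum.elim u 0
      map_add' := fun u v => by funext i; cases i <;> simp
      map_smul' := fun c u => by funext i; cases i <;> simp }
  let fpos : (Fin n → ℝ) →ₗ[ℝ] (Fin n ⊕ Fin m → ℝ) := (mulVecLin Lᵀ).comp j1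
  have hj1inj : Function.Injective j1 := by
    intro u v huv
    funext i
    exact congrFun huv (Sum.inl i)
  have hfposinj : Function.Injective fpos := by
    intro u v huv
    exact hj1inj (hLTinj huv)
  have hfposrank : Module.finrank ℝ (LinearMap.range fpos) = n := by
    rw [LinearMap.finrank_range_of_inj hfposinj, Module.finrank_fintype_fun_eq_card,
      Fintype.card_fin]
  have hfpospos : ∀ x, x ∈ LinearMap.range fpos → x ≠ 0 → 0 < x ⬝ᵥ (D *ᵥ x) := by
    rintro x ⟨u, rfl⟩ hx0
    have hu : u ≠ 0 := by rintro rfl; exact hx0 (map_zero fpos)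
    have : fpos u = Lᵀ *ᵥ (Sum.elim u 0) := rfl
    rw [this, hquad]
    rw [fromBlocks_mulVec, sumElim_dotProduct_sumElim]
    simp only [mulVec_zero, add_zero, dotProduct_zero, zero_dotProduct]
    have := hH.dotProduct_mulVec_pos hu
    simpa using this
  -- B's mulVec is injective
  have hBinj : Function.Injective B.mulVecLin := by
    rw [← LinearMap.ker_eq_bot]
    have hrange : Module.finrank ℝ (LinearMap.range B.mulVecLin) = m := hB
    have h := LinearMap.finrank_range_add_finrank_ker B.mulVecLin
    rw [hrange, Module.finrank_fintype_fun_eq_card, Fintype.card_fin] at h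
    exact Submodule.finrank_eq_zero.mp (by omega)
  have hHdet : IsUnit H.det := isUnit_iff_ne_zero.mpr hH.det_pos.ne'
  have hHinv : (H⁻¹).PosDef := hH.inv
  -- the negative subspace
  let j2 : (Fin m → ℝ) →ₗ[ℝ] (Fin n ⊕ Fin m → ℝ) :=
    { toFun := fun v => Sum.elim (-(H⁻¹ *ᵥ (B *ᵥ v))) v
      map_add' := fun u v => by
        funext i; cases i <;> simp [mulVec_add, neg_add] <;> ring
      map_smul' := fun c v => by
        funext i; cases i <;> simp [mulVec_smul] }
  let fneg : (Fin m → ℝ) →ₗ[ℝ] (Fin n ⊕ Fin m → ℝ) := (mulVecLin Lᵀ).comp j2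
  have hj2inj : Function.Injective j2 := by
    intro u v huv
    funext i
    exact congrFun huv (Sum.inr i)
  have hfneginj : Function.Injective fneg := by
    intro u v huv
    exact hj2inj (hLTinj huv)
  have hfnegrank : Module.finrank ℝ (LinearMap.range fneg) = m := by
    rw [LinearMap.finrank_range_of_inj hfneginj, Module.finrank_fintype_fun_eq_card,
      Fintype.card_fin]
  have hfnegneg : ∀ x, x ∈ LinearMap.range fneg → x ≠ 0 → x ⬝ᵥ (D *ᵥ x) < 0 := by
    rintro x ⟨v, rfl⟩ hx0
    have hv : v ≠ 0 := by rintro rfl; exact hx0 (map_zero fneg)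
    have hBv : B *ᵥ v ≠ 0 := by
      intro h0
      exact hv (hBinj (by simpa using h0))
    have hrfl : fneg v = Lᵀ *ᵥ (Sum.elim (-(H⁻¹ *ᵥ (B *ᵥ v))) v) := rfl
    rw [hrfl, hquad]
    rw [fromBlocks_mulVec, sumElim_dotProduct_sumElim]
    simp only [Sum.elim_comp_inl, Sum.elim_comp_inr]
    have hHu : H *ᵥ (-(H⁻¹ *ᵥ (B *ᵥ v))) = -(B *ᵥ v) := by
      rw [mulVec_neg, mulVec_mulVec, Matrix.mul_nonsing_inv H hHdet, one_mulVec]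
    rw [hHu]
    simp only [neg_add_cancel, dotProduct_zero, zero_add]
    have hsplit : v ⬝ᵥ (Bᵀ *ᵥ (-(H⁻¹ *ᵥ (B *ᵥ v))) + (-C) *ᵥ v) =
        -((B *ᵥ v) ⬝ᵥ (H⁻¹ *ᵥ (B *ᵥ v))) - v ⬝ᵥ (C *ᵥ v) := by
      simp only [mulVec_neg, neg_mulVec, dotProduct_neg, dotProduct_add, dotProduct_mulVec,
        vecMul_transpose]
      ring
    rw [show (Bᵀ *ᵥ (-(H⁻¹ *ᵥ (B *ᵥ v))) + (-C) *ᵥ v) = (Bᵀ *ᵥ (-(H⁻¹ *ᵥ (B *ᵥ v))) + (-C) *ᵥ v) from rfl, hsplit]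
    have h1 : 0 < (B *ᵥ v) ⬝ᵥ (H⁻¹ *ᵥ (B *ᵥ v)) := by
      have := hHinv.dotProduct_mulVec_pos hBv
      simpa using this
    have h2 : 0 ≤ v ⬝ᵥ (C *ᵥ v) := by
      have := hC.dotProduct_mulVec_nonneg v
      simpa using this
    linarith
  -- inequality 1 : n ≤ P.card
  have hineq1 : Module.finrank ℝ (LinearMap.range fpos) +
      Module.finrank ℝ (vanishOn P) ≤ Fintype.card (Fin n ⊕ Fin m) := by
    apply finrank_add_finrank_le_of_inter
    intro x hx1 hx2
    by_contra hx0
    exact absurd (hnonpos x hx2) (not_le.mpr (hfpospos x hx1 hx0))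
  -- inequality 2 : m ≤ N.card
  have hineq2 : Module.finrank ℝ (LinearMap.range fneg) +
      Module.finrank ℝ (vanishOn N) ≤ Fintype.card (Fin n ⊕ Fin m) := by
    apply finrank_add_finrank_le_of_inter
    intro x hx1 hx2
    by_contra hx0
    exact absurd (hnonneg x hx2) (not_le.mpr (hfnegneg x hx1 hx0))
  have hvP := vanishOn_finrank P
  have hvN := vanishOn_finrank N
  rw [hfposrank] at hineq1
  rw [hfnegrank] at hineq2
  rw [hcard] at hvP hvN hineq1 hineq2
  -- inequality 3 : P.card + N.card ≤ n + m
  have hdisj : Disjoint P N := by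
    rw [Finset.disjoint_left]
    intro i hiP hiN
    rw [hPdef, Finset.mem_filter] at hiP
    rw [hNdef, Finset.mem_filter] at hiN
    exact absurd hiN.2 (not_lt.mpr hiP.2.le)
  have h3 : P.card + N.card ≤ n + m := by
    calc P.card + N.card = (P ∪ N).card := (Finset.card_union_of_disjoint hdisj).symm
      _ ≤ (Finset.univ : Finset (Fin n ⊕ Fin m)).card :=
        Finset.card_le_card (Finset.subset_univ _)
      _ = n + m := by simp
  constructor <;> omega
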